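/- Let V be a Hilbert space of vector fields continuously embedded in C^1_0(ℝ^d,ℝ^d) with reproducing kernel K, and let F: V → ℝ be of the form F(v) = λ‖v‖_V² /2 + G(ξ v) where λ > 0, ξ: V → Q is a bounded linear map into a Banach space Q and G: Q → ℝ is Fréchet differentiable. Then any minimizer v of F satisfies v = -λ^{-1} K ξ* dG(ξ v); in particular v lies in the image of K ξ*. -/

import Mathlib

open scoped RealInnerProductSpace

/-- any minimizer of `v ↦ λ‖v‖²/2 + G(ξ v)` satisfies
`v = -λ⁻¹ K ξ* dG(ξ v)`; in particular it lies in the image of `K ξ*`. -/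
theorem stmt_1 {V Q : Type*} [NormedAddCommGroup V] [InnerProductSpace ℝ V] [CompleteSpace V]
    [NormedAddCommGroup Q] [NormedSpace ℝ Q]
    (ξ : V →L[ℝ] Q) (G : Q → ℝ) (dG : Q → (Q →L[ℝ] ℝ))
    (hG : ∀ q : Q, HasFDerivAt G (dG q) q)
    (lam : ℝ) (hlam : 0 < lam)
    (v : V)
    (hmin : ∀ w : V, lam * ‖v‖ ^ 2 / 2 + G (ξ v) ≤ lam * ‖w‖ ^ 2 / 2 + G (ξ w)) :
    v = -(lam⁻¹) • (InnerProductSpace.toDual ℝ V).symm ((dG (ξ v)).comp ξ) := by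
  set K := (InnerProductSpace.toDual ℝ V).symm ((dG (ξ v)).comp ξ) with hK
  -- derivative of F at v
  have hF : HasFDerivAt (fun w : V => lam * ‖w‖ ^ 2 / 2 + G (ξ w))
      ((lam / 2) • (2 • (innerSL ℝ v)) + (dG (ξ v)).comp ξ) v := by
    have h1 : HasFDerivAt (fun w : V => lam * ‖w‖ ^ 2 / 2)
        ((lam / 2) • (2 • (innerSL ℝ v))) v := by
      have := (hasStrictFDerivAt_norm_sq v).hasFDerivAt.const_smul (lam / 2)
      convert this using 2 with w
      · rfl
      · rfl
      simp [smul_eq_mul]; ring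
    exact h1.add ((hG (ξ v)).comp v (ξ.hasFDerivAt))
  have hmin' : IsLocalMin (fun w : V => lam * ‖w‖ ^ 2 / 2 + G (ξ w)) v :=
    Filter.Eventually.of_forall hmin
  have hzero := hmin'.hasFDerivAt_eq_zero hF
  -- evaluate at arbitrary w
  have key : ∀ w : V, lam * ⟪v, w⟫ + ⟪K, w⟫ = 0 := by
    intro w
    have h1 := congrArg (fun f : V →L[ℝ] ℝ => f w) hzero
    simp only [ContinuousLinearMap.add_apply, ContinuousLinearMap.smul_apply,
      ContinuousLinearMap.coe_smul', Pi.smul_apply, ContinuousLinearMap.comp_apply,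
      ContinuousLinearMap.zero_apply, innerSL_apply_apply, smul_eq_mul] at h1
    have h2 : ⟪K, w⟫ = dG (ξ v) (ξ w) := by
      rw [hK]
      simpa using (InnerProductSpace.toDual ℝ V).symm_apply_apply ((dG (ξ v)).comp ξ) ▸
        (InnerProductSpace.toDual_apply_apply (𝕜 := ℝ) ..)
    rw [h2]
    rw [nsmul_eq_mul] at h1
    nlinarith [h1]
  have : lam • v + K = 0 := by
    apply ext_inner_right ℝ
    intro w
    simpa [inner_add_left, real_inner_smul_left] using key w
  have hv : lam • v = -K := by
    linear_combination (norm := module) this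
  rw [neg_smul, ← smul_neg, ← hv, inv_smul_smul₀ hlam.ne']
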